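/- Let K = k1/k2 be nonzero differential-reduced with d1 = deg k1 < d2 − 1 where d2 = deg k2. Then for every p ∈ E[y] with deg p ≥ 1, deg(k2·D(p) + k1·p) = d2 + deg(p) − 1, and for nonzero constant p, deg(k2·D(p) + k1·p) = d1. -/
import Mathlib


open Polynomial

/-- `K = k1/k2` is differential-reduced: `gcd(k2, k1 - i·D(k2)) = 1` for all integers `i`. -/
def DiffReduced {E : Type*} [Field E] (k1 k2 : E[X]) : Prop :=
  ∀ i : ℤ, IsCoprime k2 (k1 - (i : E[X]) * derivative k2)

/-- The derivation `d/dy` on the field of rational functions `E(y)`. -/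
noncomputable def Dr {E : Type*} [Field E] (f : RatFunc E) : RatFunc E :=
  (algebraMap E[X] (RatFunc E) (derivative f.num) * algebraMap E[X] (RatFunc E) f.denom -
      algebraMap E[X] (RatFunc E) f.num * algebraMap E[X] (RatFunc E) (derivative f.denom)) /
    (algebraMap E[X] (RatFunc E) f.denom) ^ 2

theorem stmt_4 {E : Type*} [Field E] [CharZero E] (k1 k2 : E[X]) (hk1 : k1 ≠ 0)
    (hk2 : k2 ≠ 0) (hcop : IsCoprime k1 k2) (hdr : DiffReduced k1 k2)
    (hdeg : k1.natDegree + 1 < k2.natDegree) (p : E[X]) (hp : p ≠ 0) :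
    (1 ≤ p.natDegree →
        (k2 * derivative p + k1 * p).natDegree = k2.natDegree + p.natDegree - 1) ∧
      (p.natDegree = 0 → (k2 * derivative p + k1 * p).natDegree = k1.natDegree) := by
  constructor
  · intro h1
    have hd : derivative p ≠ 0 := fun h => by
      have := Polynomial.natDegree_eq_zero_of_derivative_eq_zero h
      omega
    have hdd : (derivative p).natDegree = p.natDegree - 1 := by
      refine le_antisymm (Polynomial.natDegree_derivative_le p) ?_
      apply Polynomial.le_natDegree_of_ne_zero
      rw [Polynomial.coeff_derivative]
      have h2 : p.natDegree - 1 + 1 = p.natDegree := by omega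
      rw [h2]
      have : p.coeff p.natDegree ≠ 0 := Polynomial.leadingCoeff_ne_zero.mpr hp
      have hn : ((p.natDegree - 1 : ℕ) : E) + 1 ≠ 0 := by
        exact_mod_cast (Nat.cast_add_one_ne_zero (R := E) (p.natDegree - 1))
      exact mul_ne_zero this hn
    have hA : (k2 * derivative p).natDegree = k2.natDegree + p.natDegree - 1 := by
      rw [Polynomial.natDegree_mul hk2 hd, hdd]; omega
    have hB : (k1 * p).natDegree = k1.natDegree + p.natDegree :=
      Polynomial.natDegree_mul hk1 hp
    rw [Polynomial.natDegree_add_eq_left_of_natDegree_lt (by rw [hA, hB]; omega), hA]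
  · intro h0
    have hd : derivative p = 0 := by
      rw [Polynomial.natDegree_eq_zero] at h0
      obtain ⟨c, rfl⟩ := h0
      simp
    rw [hd, mul_zero, zero_add, Polynomial.natDegree_mul hk1 hp, h0, add_zero]
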